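/- Let h : Int(Σ) → ℝ^{|X|} be defined by h(x) = π[x] − x where π[x]ᵢ = μᵢ(xᵢ/μᵢ)^{-α}/∑ₖ μₖ(xₖ/μₖ)^{-α} with α ≥ 0 and μ in the interior of the simplex. Then the Jacobian of h at x = μ equals α·μ·1ᵀ − (α+1)·I, i.e., ∂hᵢ/∂xⱼ at μ equals α·μᵢ for j ≠ i and α·μᵢ − (α+1) for j = i. -/

import Mathlib

private lemma aux_hasDerivAt_rpow (c : ℝ) (hc : 0 < c) (α : ℝ) :
    HasDerivAt (fun t : ℝ => (t / c) ^ (-α)) (-α / c) c := by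
  have h1 : HasDerivAt (fun t : ℝ => t / c) (1 / c) c := by
    simpa using (hasDerivAt_id c).div_const c
  have h3 := h1.rpow_const (p := -α) (Or.inl (by positivity))
  have hcc : c / c = 1 := div_self hc.ne'
  rw [hcc, Real.one_rpow, mul_one] at h3
  convert h3 using 1
  ring

theorem stmt_5 {X : Type*} [Fintype X] [DecidableEq X] (μ : X → ℝ)
    (hμpos : ∀ i, 0 < μ i) (hμsum : ∑ i, μ i = 1)
    (α : ℝ) (hα : 0 ≤ α) (i j : X) :
    deriv (fun t =>
        μ i * ((Function.update μ j t) i / μ i) ^ (-α) /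
          (∑ k, μ k * ((Function.update μ j t) k / μ k) ^ (-α)) -
        (Function.update μ j t) i) (μ j)
      = if j = i then α * μ i - (α + 1) else α * μ i := by
  have hDfun : ∀ t : ℝ, (∑ k, μ k * ((Function.update μ j t) k / μ k) ^ (-α))
      = μ j * (t / μ j) ^ (-α) + (1 - μ j) := by
    intro t
    rw [← Finset.add_sum_erase _ _ (Finset.mem_univ j)]
    congr 1
    · simp
    · have h1 : (1 : ℝ) - μ j = ∑ k ∈ Finset.univ.erase j, μ k := by
        rw [Finset.sum_erase_eq_sub (Finset.mem_univ j), hμsum]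
      rw [h1]
      apply Finset.sum_congr rfl
      intro k hk
      have hkj : k ≠ j := Finset.ne_of_mem_erase hk
      simp [Function.update_of_ne hkj, div_self (hμpos k).ne', Real.one_rpow]
  have hgD : HasDerivAt (fun t : ℝ => μ j * (t / μ j) ^ (-α) + (1 - μ j)) (-α) (μ j) := by
    have h := ((aux_hasDerivAt_rpow (μ j) (hμpos j) α).const_mul (μ j)).add_const (1 - μ j)
    refine h.congr_deriv ?_
    rw [mul_comm, div_mul_eq_mul_div, mul_div_assoc, div_self (hμpos j).ne', mul_one]
  have hD1 : μ j * (μ j / μ j) ^ (-α) + (1 - μ j) = 1 := by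
    rw [div_self (hμpos j).ne', Real.one_rpow]; ring
  by_cases hji : j = i
  · subst hji
    have heq : (fun t : ℝ =>
        μ j * ((Function.update μ j t) j / μ j) ^ (-α) /
          (∑ k, μ k * ((Function.update μ j t) k / μ k) ^ (-α)) -
        (Function.update μ j t) j)
        = fun t : ℝ => μ j * (t / μ j) ^ (-α) /
            (μ j * (t / μ j) ^ (-α) + (1 - μ j)) - t := by
      funext t
      rw [hDfun t]
      simp
    rw [heq]
    have hN : HasDerivAt (fun t : ℝ => μ j * (t / μ j) ^ (-α)) (-α) (μ j) := by
      have h := (aux_hasDerivAt_rpow (μ j) (hμpos j) α).const_mul (μ j)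
      refine h.congr_deriv ?_
      rw [mul_comm, div_mul_eq_mul_div, mul_div_assoc, div_self (hμpos j).ne', mul_one]
    have hfinal := (hN.div hgD (by rw [hD1]; norm_num)).sub (hasDerivAt_id' (μ j))
    erw [hfinal.deriv]
    rw [hD1]
    have hNval : μ j * (μ j / μ j) ^ (-α) = μ j := by
      rw [div_self (hμpos j).ne', Real.one_rpow, mul_one]
    rw [hNval]
    rw [if_pos rfl]
    ring
  · have hij : i ≠ j := fun h => hji h.symm
    have heq : (fun t : ℝ =>
        μ i * ((Function.update μ j t) i / μ i) ^ (-α) /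
          (∑ k, μ k * ((Function.update μ j t) k / μ k) ^ (-α)) -
        (Function.update μ j t) i)
        = fun t : ℝ => μ i /
            (μ j * (t / μ j) ^ (-α) + (1 - μ j)) - μ i := by
      funext t
      rw [hDfun t]
      simp [Function.update_of_ne hij, div_self (hμpos i).ne', Real.one_rpow]
    rw [heq]
    have hfinal := (((hasDerivAt_const (μ j) (μ i)).div hgD
      (by rw [hD1]; norm_num))).sub_const (μ i)
    erw [hfinal.deriv]
    rw [hD1]
    simp [hji]
    ring
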